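/- arXiv:2602.21565 — 2 statements merged into one kernel-verified Lean document; each statement's English description precedes it below -/
import Mathlib

section
/- Let $(S, A)$ be a finite directed acyclic graph with a unique initial state $s_0$. For each $i \in \{1,\dots,k\}$, let $p_{i,F}$ be a forward policy and $u_i : S \to \mathbb{R}_{\ge 0}$ satisfy the reaching-probability recursion: $u_i(s_0) = 1$ and $u_i(s) = \sum_{s_* : (s_* \to s) \in A} u_i(s_*)\, p_{i,F}(s \mid s_*)$ for all $s \ne s_0$. Let $v_1,\dots,v_k \ge 0$ with $\sum_i v_i = 1$, define $u_M(s) := \sum_i v_i u_i(s)$, and assume $u_M(s) > 0$ on all relevant states. Define the mixing policy $p_{M,F}(s' \mid s) := \sum_{i=1}^k \frac{v_i u_i(s)}{u_M(s)} p_{i,F}(s' \mid s)$. Then $u_M$ satisfies the same recursion under $p_{M,F}$: $u_M(s_0) = 1$ and $u_M(s) = \sum_{s_* : (s_* \to s) \in A} u_M(s_*)\, p_{M,F}(s \mid s_*)$ for all $s \ne s_0$. -/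
open Finset

/-- The mixed reaching probability `u_M = ∑ i, v i * u i` satisfies the
reaching-probability recursion under the mixing policy. -/
theorem mixed_reaching_probability_recursion
    {S : Type*} [Fintype S] [DecidableEq S]
    (A : S → S → Prop) [DecidableRel A] (s0 : S)
    (k : ℕ) (pF : Fin k → S → S → ℝ) (u : Fin k → S → ℝ)
    (hu_nonneg : ∀ i s, 0 ≤ u i s)
    (hu_init : ∀ i, u i s0 = 1)
    (hu_rec : ∀ i, ∀ s, s ≠ s0 →
      u i s = ∑ sp ∈ Finset.univ.filter (fun sp => A sp s), u i sp * pF i sp s)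
    (v : Fin k → ℝ) (hv_nonneg : ∀ i, 0 ≤ v i) (hv_sum : ∑ i, v i = 1)
    (uM : S → ℝ) (huM : ∀ s, uM s = ∑ i, v i * u i s)
    (huM_pos : ∀ s, 0 < uM s)
    (pMF : S → S → ℝ)
    (hpMF : ∀ s s', pMF s s' = ∑ i, (v i * u i s / uM s) * pF i s s') :
    uM s0 = 1 ∧ ∀ s, s ≠ s0 →
      uM s = ∑ sp ∈ Finset.univ.filter (fun sp => A sp s), uM sp * pMF sp s := by
  constructor
  · rw [huM]; simp [hu_init, hv_sum]
  · intro s hs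
    have key : ∀ sp, uM sp * pMF sp s = ∑ i, v i * u i sp * pF i sp s := by
      intro sp
      rw [hpMF, Finset.mul_sum]
      refine Finset.sum_congr rfl fun i _ => ?_
      field_simp [(huM_pos sp).ne']
    simp_rw [key]
    rw [Finset.sum_comm, huM]
    refine Finset.sum_congr rfl fun i _ => ?_
    rw [hu_rec i s hs, Finset.mul_sum]
    exact Finset.sum_congr rfl fun sp _ => by ring
end

section
/- Let $(S,A)$ be a finite DAG with source $s_0$ and sink $s_f$, and suppose forward policies $p_{1,F},\dots,p_{k,F}$ with reaching probabilities $u_1,\dots,u_k$ and convex weights $v_1,\dots,v_k$ ($v_i \ge 0$, $\sum v_i = 1$, $u_M := \sum_i v_i u_i > 0$ on relevant states). Let $p_{M,F}(s'\mid s) = \sum_i \frac{v_i u_i(s)}{u_M(s)} p_{i,F}(s'\mid s)$ be the mixing policy and let $p_M(x)$ be its induced terminating-state distribution. If each component's terminating-state distribution $p_i$ satisfies $p_i(x) = u_i(x) p_{i,F}(s_f \mid x)$ and $u_M$ is the reaching probability of $p_{M,F}$, then for every terminating state $x$: $p_M(x) = u_M(x)\, p_{M,F}(s_f \mid x) = \sum_{i=1}^k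 v_i u_i(x)\, p_{i,F}(s_f \mid x) = \sum_{i=1}^k v_i p_i(x)$. -/
open Finset

/-- Full correctness of the mixing policy: the induced terminating-state
distribution equals the `v`-weighted mixture of the component terminating
distributions. -/
theorem mixing_policy_terminating_distribution
    {S : Type*} [Fintype S] [DecidableEq S]
    (A : S → S → Prop) (s0 sf : S)
    (k : ℕ) (pF : Fin k → S → S → ℝ) (u : Fin k → S → ℝ)
    (hu_nonneg : ∀ i s, 0 ≤ u i s)
    (v : Fin k → ℝ) (hv_nonneg : ∀ i, 0 ≤ v i) (hv_sum : ∑ i, v i = 1)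
    (uM : S → ℝ) (huM : ∀ s, uM s = ∑ i, v i * u i s)
    (huM_pos : ∀ s, 0 < uM s)
    (pMF : S → S → ℝ)
    (hpMF : ∀ s s', pMF s s' = ∑ i, (v i * u i s / uM s) * pF i s s')
    (p : Fin k → S → ℝ) (hp : ∀ i x, p i x = u i x * pF i x sf)
    (pM : S → ℝ) (hpM : ∀ x, pM x = uM x * pMF x sf) :
    ∀ x, pM x = uM x * pMF x sf ∧
      pM x = ∑ i, v i * (u i x * pF i x sf) ∧
      pM x = ∑ i, v i * p i x := by
  intro x
  have hne : uM x ≠ 0 := (huM_pos x).ne'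
  have h2 : pM x = ∑ i, v i * (u i x * pF i x sf) := by
    rw [hpM, hpMF, Finset.mul_sum]
    apply Finset.sum_congr rfl
    intro i _
    field_simp
  refine ⟨hpM x, h2, ?_⟩
  rw [h2]
  exact Finset.sum_congr rfl fun i _ => by rw [hp]
end
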